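/- Let T = (T_1, …, T_m) : ℝ^n → ℝ^m be a C^∞ map, and let x₀ ∈ ℝ^n satisfy T(x₀) = 0 with the Fréchet derivative DT(x₀) : ℝ^n → ℝ^m surjective. Let f : ℝ^n → ℝ be C^∞ and suppose f vanishes on the zero set {x : T(x) = 0} in some neighborhood of x₀. Then there exist an open neighborhood U of x₀ and C^∞ functions g_1, …, g_m : U → ℝ such that f(x) = Σ_{a=1}^m g_a(x) T_a(x) for all x ∈ U. (This is the triviality criterion: near a regular point of the constraint surface, every smooth function vanishing on the surface lies in the ideal generated by the constraints.) -/

import Mathlib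

open Set MeasureTheory intervalIntegral Function Metric
open scoped ContDiff

universe u

section ParamInt
variable {E : Type u} [NormedAddCommGroup E] [NormedSpace ℝ E] [FiniteDimensional ℝ E]
  {F : Type u} [NormedAddCommGroup F] [NormedSpace ℝ F] [CompleteSpace F]

set_option synthInstance.maxHeartbeats 1000000 in
theorem aux_hasFDerivAt_parint {H : ℝ → E → F} (hH : ContDiff ℝ ∞ (uncurry H)) (x₀ : E) :
    HasFDerivAt (fun x => ∫ t in (0:ℝ)..1, H t x)
      (∫ t in (0:ℝ)..1,
        (fderiv ℝ (uncurry H) (t, x₀)).comp (ContinuousLinearMap.inr ℝ ℝ E)) x₀ := by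
  set H' : ℝ → E → (E →L[ℝ] F) := fun t x =>
    (fderiv ℝ (uncurry H) (t, x)).comp (ContinuousLinearMap.inr ℝ ℝ E) with hH'def
  have hH'cont : Continuous (uncurry H') := by
    have : ContDiff ℝ ∞ (fderiv ℝ (uncurry H)) :=
      hH.fderiv_right (le_of_eq (show (∞ : WithTop ℕ∞) + 1 = ∞ from rfl))
    exact ((this.clm_comp contDiff_const).continuous).comp continuous_id |>.congr (fun p => rfl)
  have hdiff : ∀ (t : ℝ) (x : E), HasFDerivAt (fun y => H t y) (H' t x) x := by
    intro t x
    have h1 : HasFDerivAt (fun y : E => ((t, y) : ℝ × E))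
        (ContinuousLinearMap.inr ℝ ℝ E) x := (hasFDerivAt_const t x).prodMk (hasFDerivAt_id x)
    exact ((hH.differentiable (by simp)).differentiableAt.hasFDerivAt).comp x h1
  obtain ⟨C, hC⟩ := ((isCompact_Icc (a := (0:ℝ)) (b := 1)).prod
      (isCompact_closedBall x₀ 1)).exists_bound_of_continuousOn hH'cont.continuousOn
  have key := intervalIntegral.hasFDerivAt_integral_of_dominated_of_fderiv_le
    (F := fun x t => H t x) (F' := fun x t => H' t x) (x₀ := x₀) (a := (0:ℝ)) (b := 1)
    (μ := volume) (bound := fun _ => C) (s := Metric.ball x₀ 1) (Metric.ball_mem_nhds x₀ one_pos)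
    (Filter.Eventually.of_forall fun x =>
      ((hH.continuous.comp (continuous_id.prodMk continuous_const)).aestronglyMeasurable))
    ((hH.continuous.comp (continuous_id.prodMk continuous_const)).intervalIntegrable 0 1)
    ((hH'cont.comp (continuous_id.prodMk continuous_const)).aestronglyMeasurable)
    (ae_of_all _ fun t ht x hx => by
      refine hC (t, x) ⟨?_, Metric.ball_subset_closedBall hx⟩
      rw [Set.uIoc_of_le (by norm_num : (0:ℝ) ≤ 1)] at ht
      exact Ioc_subset_Icc_self ht)
    (intervalIntegrable_const)
    (ae_of_all _ fun t ht x hx => hdiff t x)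
  exact key

end ParamInt

section ParamInt2
variable {E : Type u} [NormedAddCommGroup E] [NormedSpace ℝ E] [FiniteDimensional ℝ E]

theorem aux_contDiff_parint (k : ℕ) :
    ∀ {F : Type u} [NormedAddCommGroup F] [NormedSpace ℝ F] [CompleteSpace F]
    (H : ℝ → E → F), ContDiff ℝ ∞ (uncurry H) →
    ContDiff ℝ (k : WithTop ℕ∞) (fun x => ∫ t in (0:ℝ)..1, H t x) := by
  induction k with
  | zero =>
    intro F _ _ _ H hH
    exact contDiff_zero.mpr
      (continuous_iff_continuousAt.mpr
        (fun x => (aux_hasFDerivAt_parint hH x).differentiableAt.continuousAt))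
  | succ k ih =>
    intro F _ _ _ H hH
    have hH' : ContDiff ℝ ∞ (uncurry fun (t : ℝ) (x : E) =>
        (fderiv ℝ (uncurry H) (t, x)).comp (ContinuousLinearMap.inr ℝ ℝ E)) := by
      exact (hH.fderiv_right (le_of_eq (show (∞ : WithTop ℕ∞) + 1 = ∞ from rfl))).clm_comp
        contDiff_const
    have hfd : fderiv ℝ (fun x => ∫ t in (0:ℝ)..1, H t x) = fun x => ∫ t in (0:ℝ)..1,
        (fderiv ℝ (uncurry H) (t, x)).comp (ContinuousLinearMap.inr ℝ ℝ E) :=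
      funext fun x => (aux_hasFDerivAt_parint hH x).fderiv
    have : ((k + 1 : ℕ) : WithTop ℕ∞) = (k : WithTop ℕ∞) + 1 := by push_cast; rfl
    rw [this, contDiff_succ_iff_fderiv]
    refine ⟨fun x => (aux_hasFDerivAt_parint hH x).differentiableAt, by simp, ?_⟩
    rw [hfd]
    exact ih _ hH'

end ParamInt2

theorem aux_hadamard {m : ℕ} {K : Type} [NormedAddCommGroup K] [NormedSpace ℝ K]
    [FiniteDimensional ℝ K]
    (F : (Fin m → ℝ) × K → ℝ) (hF : ContDiff ℝ ∞ F) (h0 : ∀ z : K, F (0, z) = 0) :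
    ∃ G : Fin m → ((Fin m → ℝ) × K) → ℝ, (∀ a, ContDiff ℝ ∞ (G a)) ∧
      ∀ p, F p = ∑ a, p.1 a * G a p := by
  have hinf : (∞ : WithTop ℕ∞) + 1 ≤ ∞ := le_of_eq rfl
  have h1 : (1 : WithTop ℕ∞) ≤ ∞ := by exact_mod_cast le_top
  -- the scaling map
  have hφ : ContDiff ℝ ∞ (fun q : ℝ × ((Fin m → ℝ) × K) => ((q.1 • q.2.1, q.2.2) :
      (Fin m → ℝ) × K)) :=
    (contDiff_fst.smul (contDiff_snd.fst)).prodMk contDiff_snd.snd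
  -- joint smoothness of the integrand
  have hHa : ∀ a : Fin m, ContDiff ℝ ∞ (uncurry fun (t : ℝ) (p : (Fin m → ℝ) × K) =>
      (fderiv ℝ F (t • p.1, p.2)) ((Pi.single a 1 : Fin m → ℝ), (0:K))) := by
    intro a
    exact (((hF.fderiv_right hinf).comp hφ).clm_apply contDiff_const)
  refine ⟨fun a p => ∫ t in (0:ℝ)..1,
      (fderiv ℝ F (t • p.1, p.2)) ((Pi.single a 1 : Fin m → ℝ), (0:K)), ?_, ?_⟩
  · intro a
    rw [contDiff_infty]
    intro k
    exact aux_contDiff_parint k _ (hHa a)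
  · rintro ⟨y, z⟩
    have hderiv : ∀ t : ℝ, HasDerivAt (fun t : ℝ => F (t • y, z))
        ((fderiv ℝ F (t • y, z)) (y, (0:K))) t := by
      intro t
      have hψ : HasDerivAt (fun t : ℝ => ((t • y, z) : (Fin m → ℝ) × K)) ((y, (0:K))) t := by
        have h1 : HasDerivAt (fun t : ℝ => t • y) ((1:ℝ) • y) t :=
          (hasDerivAt_id t).smul_const y
        rw [one_smul] at h1
        exact h1.prodMk (hasDerivAt_const t z)
      exact ((hF.differentiable (by simp)) _).hasFDerivAt.comp_hasDerivAt t hψ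
    have hcont : ∀ v : (Fin m → ℝ) × K, Continuous fun t : ℝ =>
        (fderiv ℝ F (t • y, z)) v := by
      intro v
      have : Continuous fun t : ℝ => fderiv ℝ F (t • y, z) :=
        ((hF.fderiv_right hinf).continuous).comp (by fun_prop)
      exact this.clm_apply continuous_const
    have hFTC : ∫ t in (0:ℝ)..1, (fderiv ℝ F (t • y, z)) (y, (0:K)) = F (y, z) := by
      rw [intervalIntegral.integral_eq_sub_of_hasDerivAt (fun t _ => hderiv t)
        (((hcont _)).intervalIntegrable 0 1)]
      simp [h0 z]
    have hdecomp : ((y, (0:K)) : (Fin m → ℝ) × K)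
        = ∑ a, y a • ((Pi.single a 1 : Fin m → ℝ), (0:K)) := by
      ext j
      · simp only [Prod.fst_sum, Prod.smul_mk, Finset.sum_apply, Pi.smul_apply,
          Pi.single_apply, smul_eq_mul, mul_ite, mul_one, mul_zero]
        rw [Finset.sum_ite_eq Finset.univ j y]
        simp
      · simp [Prod.snd_sum]
    have hsplit : ∀ t : ℝ, (fderiv ℝ F (t • y, z)) (y, (0:K))
        = ∑ a, y a * (fderiv ℝ F (t • y, z)) ((Pi.single a 1 : Fin m → ℝ), (0:K)) := by
      intro t
      rw [hdecomp, map_sum]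
      exact Finset.sum_congr rfl fun a _ => by rw [ContinuousLinearMap.map_smul, smul_eq_mul]
    calc F (y, z) = ∫ t in (0:ℝ)..1, (fderiv ℝ F (t • y, z)) (y, (0:K)) := hFTC.symm
      _ = ∫ t in (0:ℝ)..1, ∑ a, y a *
            (fderiv ℝ F (t • y, z)) ((Pi.single a 1 : Fin m → ℝ), (0:K)) := by
          simp_rw [hsplit]
      _ = ∑ a, y a * ∫ t in (0:ℝ)..1,
            (fderiv ℝ F (t • y, z)) ((Pi.single a 1 : Fin m → ℝ), (0:K)) := by
          rw [intervalIntegral.integral_finset_sum]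
          · exact Finset.sum_congr rfl fun a _ => intervalIntegral.integral_const_mul _ _
          · intro a _
            exact (continuous_const.mul (hcont _)).intervalIntegrable 0 1
      _ = ∑ a, ((y, z) : (Fin m → ℝ) × K).1 a * ∫ t in (0:ℝ)..1,
            (fderiv ℝ F (t • ((y, z) : (Fin m → ℝ) × K).1, ((y, z) : (Fin m → ℝ) × K).2))
              ((Pi.single a 1 : Fin m → ℝ), (0:K)) := rfl

set_option maxHeartbeats 1000000 in
theorem smooth_vanishing_on_regular_level_set_mem_ideal
    (n m : ℕ)
    (T : (Fin n → ℝ) → (Fin m → ℝ)) (hT : ContDiff ℝ (⊤ : ℕ∞) T)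
    (x₀ : Fin n → ℝ) (hx₀ : T x₀ = 0)
    (hsubm : Function.Surjective (fderiv ℝ T x₀))
    (f : (Fin n → ℝ) → ℝ) (hf : ContDiff ℝ (⊤ : ℕ∞) f)
    (hvanish : ∃ U₀ ∈ nhds x₀, ∀ x ∈ U₀, T x = 0 → f x = 0) :
    ∃ U : Set (Fin n → ℝ), IsOpen U ∧ x₀ ∈ U ∧
      ∃ g : Fin m → (Fin n → ℝ) → ℝ,
        (∀ a, ContDiffOn ℝ (⊤ : ℕ∞) (g a) U) ∧
        ∀ x ∈ U, f x = ∑ a, g a x * T x a := by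
  classical
  obtain ⟨U₀, hU₀nhds, hU₀⟩ := hvanish
  have h1 : (1 : WithTop ℕ∞) ≤ ∞ := by exact_mod_cast le_top
  set L : (Fin n → ℝ) →L[ℝ] (Fin m → ℝ) := fderiv ℝ T x₀ with hLdef
  set Kk : Submodule ℝ (Fin n → ℝ) := LinearMap.ker (L : (Fin n → ℝ) →ₗ[ℝ] (Fin m → ℝ)) with hKkdef
  obtain ⟨W, hW⟩ := Submodule.exists_isCompl Kk
  set proj : (Fin n → ℝ) →ₗ[ℝ] Kk := Kk.linearProjOfIsCompl W hW with hprojdef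
  have hproj_left : ∀ x : Kk, proj (x : Fin n → ℝ) = x := fun x =>
    Submodule.linearProjOfIsCompl_apply_left hW x
  set D : (Fin n → ℝ) →ₗ[ℝ] (Fin m → ℝ) × Kk := LinearMap.prod (L : _ →ₗ[ℝ] _) proj with hDdef
  have hDinj : Function.Injective D := by
    rw [← LinearMap.ker_eq_bot, LinearMap.ker_eq_bot']
    intro x hx
    have h1' : L x = 0 := congrArg Prod.fst hx
    have h2' : proj x = 0 := congrArg Prod.snd hx
    have hmem : x ∈ Kk := LinearMap.mem_ker.mpr h1'
    have := hproj_left ⟨x, hmem⟩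
    rw [h2'] at this
    simpa using congrArg (Subtype.val) this.symm
  have hDsurj : Function.Surjective D := by
    rintro ⟨v, k⟩
    obtain ⟨u, hu⟩ := hsubm v
    refine ⟨(u - (proj u : Fin n → ℝ)) + (k : Fin n → ℝ), ?_⟩
    have hLk : L (k : Fin n → ℝ) = 0 := k.2
    have hLpu : L ((proj u : Kk) : Fin n → ℝ) = 0 := (proj u).2
    have hfst : L ((u - (proj u : Fin n → ℝ)) + (k : Fin n → ℝ)) = v := by
      rw [map_add, map_sub, hLk, hLpu, hu]; abel
    have hsnd : proj ((u - (proj u : Fin n → ℝ)) + (k : Fin n → ℝ)) = k := by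
      rw [map_add, map_sub, hproj_left (proj u), hproj_left k]; abel
    exact Prod.ext hfst hsnd
  set A : (Fin n → ℝ) ≃L[ℝ] (Fin m → ℝ) × Kk :=
    (LinearEquiv.ofBijective D ⟨hDinj, hDsurj⟩).toContinuousLinearEquiv with hAdef
  set projL : (Fin n → ℝ) →L[ℝ] Kk := LinearMap.toContinuousLinearMap proj with hprojLdef
  set Φ : (Fin n → ℝ) → (Fin m → ℝ) × Kk := fun x => (T x, projL x) with hΦdef
  have hΦsmooth : ContDiff ℝ ∞ Φ := hT.prodMk projL.contDiff
  have hAcoe : (A : (Fin n → ℝ) →L[ℝ] (Fin m → ℝ) × Kk) = L.prod projL := by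
    ext x <;> rfl
  have hΦd : HasFDerivAt Φ (A : (Fin n → ℝ) →L[ℝ] (Fin m → ℝ) × Kk) x₀ := by
    rw [hAcoe]
    exact ((hT.differentiable (by simp) x₀).hasFDerivAt).prodMk projL.hasFDerivAt
  have hS : HasStrictFDerivAt Φ (A : (Fin n → ℝ) →L[ℝ] (Fin m → ℝ) × Kk) x₀ :=
    hΦsmooth.contDiffAt.hasStrictFDerivAt' hΦd (by simp)
  set e := hS.toOpenPartialHomeomorph Φ with hedef
  have hecoe : ∀ x, e x = Φ x := fun _ => rfl
  have hx₀src : x₀ ∈ e.source := hS.mem_toOpenPartialHomeomorph_source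
  have hΦx₀tgt : Φ x₀ ∈ e.target := hS.image_mem_toOpenPartialHomeomorph_target
  have hψΦx₀ : e.symm (Φ x₀) = x₀ := e.left_inv hx₀src
  have hψc : ContinuousAt e.symm (Φ x₀) := e.continuousAt_symm hΦx₀tgt
  -- smoothness of the local inverse near `Φ x₀`
  have hev : ∀ᶠ p in nhds (Φ x₀), ContDiffAt ℝ ∞ e.symm p := by
    set ρ : (Fin n → ℝ) → ((Fin n → ℝ) →L[ℝ] (Fin n → ℝ)) := fun x =>
      ((A.symm : (Fin m → ℝ) × Kk →L[ℝ] (Fin n → ℝ)).comp (fderiv ℝ Φ x)) with hρdef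
    have hρcont : Continuous ρ := continuous_const.clm_comp (hΦsmooth.continuous_fderiv (by simp))
    have hρx₀ : IsUnit (ρ x₀) := by
      have : ρ x₀ = 1 := by
        ext v
        simp [hρdef, hΦd.fderiv]
      exact this ▸ isUnit_one
    have hUopen : IsOpen {x : Fin n → ℝ | IsUnit (ρ x)} := Units.isOpen.preimage hρcont
    have h2ev : ∀ᶠ p in nhds (Φ x₀), IsUnit (ρ (e.symm p)) := by
      have hx : ∀ᶠ x in nhds (e.symm (Φ x₀)), IsUnit (ρ x) := by
        rw [hψΦx₀]
        exact Filter.eventually_of_mem (hUopen.mem_nhds hρx₀) fun q hq => hq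
      exact hψc hx
    have h1ev : ∀ᶠ p in nhds (Φ x₀), p ∈ e.target :=
      Filter.eventually_of_mem (e.open_target.mem_nhds hΦx₀tgt) (fun q hq => hq)
    filter_upwards [h1ev, h2ev] with p hp1 hp2
    obtain ⟨u, hu⟩ := hp2
    set B : (Fin n → ℝ) ≃L[ℝ] (Fin m → ℝ) × Kk :=
      (ContinuousLinearEquiv.unitsEquiv ℝ _ u).trans A with hBdef
    have hB : (B : (Fin n → ℝ) →L[ℝ] (Fin m → ℝ) × Kk) = fderiv ℝ Φ (e.symm p) := by
      refine ContinuousLinearMap.ext fun v => ?_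
      show A ((u : (Fin n → ℝ) →L[ℝ] (Fin n → ℝ)) v) = fderiv ℝ Φ (e.symm p) v
      rw [hu]
      simp [hρdef, ContinuousLinearMap.comp_apply]
    have hd : HasFDerivAt Φ (B : (Fin n → ℝ) →L[ℝ] (Fin m → ℝ) × Kk) (e.symm p) := by
      rw [hB]; exact (hΦsmooth.differentiable (by simp) _).hasFDerivAt
    exact e.contDiffAt_symm hp1 hd hΦsmooth.contDiffAt
  -- assemble the neighborhood `V` of `Φ x₀`
  have hright : ∀ᶠ p in nhds (Φ x₀), Φ (e.symm p) = p := e.eventually_right_inverse' hx₀src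
  have hmemU₀ : ∀ᶠ p in nhds (Φ x₀), e.symm p ∈ U₀ := by
    have hx : ∀ᶠ x in nhds (e.symm (Φ x₀)), x ∈ U₀ := by rw [hψΦx₀]; exact hU₀nhds
    exact hψc hx
  obtain ⟨V, hVprop, hVopen, hVmem⟩ := _root_.eventually_nhds_iff.mp ((hev.and hright).and hmemU₀)
  obtain ⟨r, hr0, hrV⟩ := Metric.isOpen_iff.mp hVopen _ hVmem
  set χ : ContDiffBump (Φ x₀) := ⟨r/3, r/2, by positivity, by linarith⟩ with hχdef
  have hclosedV : closedBall (Φ x₀) (r/2) ⊆ V :=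
    (closedBall_subset_ball (by linarith)).trans hrV
  set g0 : (Fin m → ℝ) × Kk → ℝ := fun p => if p ∈ V then f (e.symm p) else 0 with hg0def
  set Fbig : (Fin m → ℝ) × Kk → ℝ := fun p => χ p * g0 p with hFbigdef
  have hFbigSmooth : ContDiff ℝ ∞ Fbig := by
    rw [contDiff_iff_contDiffAt]
    intro p
    by_cases hp : p ∈ V
    · obtain ⟨⟨hsm, -⟩, -⟩ := hVprop p hp
      have hmain : ContDiffAt ℝ ∞ (fun q => (χ q : ℝ) * f (e.symm q)) p :=
        (χ.contDiff.contDiffAt).mul ((hf.contDiffAt).comp p hsm)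
      refine hmain.congr_of_eventuallyEq ?_
      exact Filter.eventuallyEq_of_mem (hVopen.mem_nhds hp) fun q hq => by
        simp [hFbigdef, hg0def, hq]
    · have hpt : p ∉ tsupport (χ : (Fin m → ℝ) × Kk → ℝ) := by
        rw [χ.tsupport_eq]
        exact fun hmem => hp (hclosedV hmem)
      have h0' : ∀ᶠ q in nhds p, Fbig q = 0 := by
        refine Filter.eventually_of_mem
          ((isClosed_tsupport _).isOpen_compl.mem_nhds hpt) fun q hq => ?_
        simp [hFbigdef, image_eq_zero_of_notMem_tsupport hq]
      exact contDiffAt_const.congr_of_eventuallyEq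
        (h0'.mono fun q hq => by rw [hq])
  have hFbig0 : ∀ z : Kk, Fbig (0, z) = 0 := by
    intro z
    by_cases h : ((0 : Fin m → ℝ), z) ∈ V
    · obtain ⟨⟨-, hΦψ⟩, hU₀mem⟩ := hVprop _ h
      have hT0 : T (e.symm (0, z)) = 0 := congrArg Prod.fst hΦψ
      have : f (e.symm ((0 : Fin m → ℝ), z)) = 0 := hU₀ _ hU₀mem hT0
      simp [hFbigdef, hg0def, h, this]
    · simp [hFbigdef, hg0def, h]
  obtain ⟨G, hGsmooth, hGeq⟩ := aux_hadamard Fbig hFbigSmooth hFbig0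
  -- the left-inverse neighborhood
  obtain ⟨U₁, hU₁prop, hU₁open, hU₁mem⟩ :=
    _root_.eventually_nhds_iff.mp (e.eventually_left_inverse hx₀src)
  refine ⟨U₁ ∩ Φ ⁻¹' (ball (Φ x₀) (r/3)),
    hU₁open.inter (Metric.isOpen_ball.preimage hΦsmooth.continuous),
    ⟨hU₁mem, mem_ball_self (by positivity)⟩,
    fun a x => G a (Φ x), fun a => ((hGsmooth a).comp hΦsmooth).contDiffOn, ?_⟩
  rintro x ⟨hx1, hx2⟩
  have hx2' : Φ x ∈ ball (Φ x₀) (r/3) := hx2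
  have hΦxV : Φ x ∈ V := hrV (Metric.ball_subset_ball (by linarith) hx2')
  have hχ1 : χ (Φ x) = 1 := χ.one_of_mem_closedBall (ball_subset_closedBall hx2')
  have hψΦx : e.symm (Φ x) = x := hU₁prop x hx1
  have hFx : Fbig (Φ x) = f x := by
    simp [hFbigdef, hg0def, hΦxV, hχ1, hψΦx]
  calc f x = Fbig (Φ x) := hFx.symm
    _ = ∑ a, (Φ x).1 a * G a (Φ x) := hGeq (Φ x)
    _ = ∑ a, G a (Φ x) * T x a := Finset.sum_congr rfl fun a _ => mul_comm _ _
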